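/- For every real ε, the integral over the circle satisfies ∫_{𝕋} log|cos(2π(θ + iε))| dθ = 2π|ε| − log 2. -/

import Mathlib

open MeasureTheory Real intervalIntegral Complex

-- |log x| ≤ 2 (x^(-1/2) + x^(1/2)) for x > 0
lemma abs_log_le {x : ℝ} (hx : 0 < x) :
    |Real.log x| ≤ 2 * (x ^ (-(1/2) : ℝ) + x ^ ((1/2) : ℝ)) := by
  rcases le_total x 1 with h | h
  · rw [_root_.abs_of_nonpos (Real.log_nonpos hx.le h)]
    have h1 : Real.log (x ^ (-(1/2) : ℝ)) ≤ x ^ (-(1/2) : ℝ) :=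
      Real.log_le_sub_one_of_pos (by positivity) |>.trans (by linarith)
    rw [Real.log_rpow hx] at h1
    nlinarith [Real.rpow_nonneg hx.le ((1:ℝ)/2), Real.rpow_nonneg hx.le (-(1:ℝ)/2),
      Real.rpow_nonneg hx.le (-(1/2):ℝ)]
  · rw [_root_.abs_of_nonneg (Real.log_nonneg h)]
    have h1 : Real.log (x ^ ((1/2) : ℝ)) ≤ x ^ ((1/2) : ℝ) :=
      Real.log_le_sub_one_of_pos (by positivity) |>.trans (by linarith)
    rw [Real.log_rpow hx] at h1
    nlinarith [Real.rpow_nonneg hx.le ((1:ℝ)/2), Real.rpow_nonneg hx.le (-(1/2):ℝ)]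

lemma intervalIntegrable_log_abs (a b : ℝ) :
    IntervalIntegrable (fun x => Real.log |x|) volume a b := by
  suffices h : ∀ c : ℝ, 0 ≤ c → IntervalIntegrable (fun x => Real.log |x|) volume 0 c by
    have key : ∀ c : ℝ, IntervalIntegrable (fun x => Real.log |x|) volume 0 c := by
      intro c
      rcases le_total 0 c with hc | hc
      · exact h c hc
      · rw [IntervalIntegrable.iff_comp_neg]
        simpa using h (-c) (by linarith)
    exact (key a).symm.trans (key b)
  intro c hc
  rw [intervalIntegrable_iff, Set.uIoc_of_le hc]
  apply Integrable.mono' (g := fun x => 2 * (x ^ (-(1/2) : ℝ) + x ^ ((1/2) : ℝ)))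
  · have h1 : IntervalIntegrable (fun x : ℝ => x ^ (-(1/2) : ℝ)) volume 0 c :=
      intervalIntegrable_rpow' (by norm_num)
    have h2 : IntervalIntegrable (fun x : ℝ => x ^ ((1/2) : ℝ)) volume 0 c :=
      intervalIntegrable_rpow' (by norm_num)
    have := ((h1.add h2).const_mul 2)
    rwa [intervalIntegrable_iff, Set.uIoc_of_le hc] at this
  · exact (Real.measurable_log.comp measurable_abs).aestronglyMeasurable
  · filter_upwards [ae_restrict_mem measurableSet_Ioc] with x hx
    rw [_root_.abs_of_pos hx.1] 
    exact abs_log_le hx.1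


lemma four_mul_le_abs_cos {θ : ℝ} (h0 : 0 ≤ θ) (h1 : θ ≤ 1/2) :
    4 * |θ - 1/4| ≤ |Real.cos (2 * π * θ)| := by
  have hx : |π/2 - 2*π*θ| ≤ π/2 := by
    rw [abs_le]
    constructor <;> nlinarith [pi_pos]
  have key := Real.mul_abs_le_abs_sin hx
  rw [Real.sin_pi_div_two_sub] at key
  have he : |π/2 - 2*π*θ| = |2*π*(1/4 - θ)| := by congr 1; ring
  rw [he, abs_mul, _root_.abs_of_pos (by positivity : (0:ℝ) < 2*π), ← abs_neg (1/4 - θ)] at key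
  have : 2/π * (2*π*|-(1/4 - θ)|) = 4 * |θ - 1/4| := by
    field_simp
    ring_nf
  rwa [this] at key

lemma intervalIntegrable_log_abs_cos_half :
    IntervalIntegrable (fun θ => Real.log |Real.cos (2 * π * θ)|) volume 0 (1/2) := by
  have h : IntervalIntegrable (fun θ : ℝ => -Real.log |θ - 1/4|) volume 0 (1/2) := by
    have h0 := ((intervalIntegrable_log_abs (-(1/4)) (1/4)).comp_sub_right (1/4)).neg
    norm_num at h0 ⊢
    exact h0
  rw [intervalIntegrable_iff, Set.uIoc_of_le (by norm_num : (0:ℝ) ≤ 1/2)] at h ⊢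
  apply Integrable.mono' h
  · exact (Real.measurable_log.comp
      (measurable_abs.comp ((Real.measurable_cos.comp (measurable_const.mul measurable_id))))).aestronglyMeasurable
  · filter_upwards [ae_restrict_mem measurableSet_Ioc] with θ hθ
    have hle := four_mul_le_abs_cos hθ.1.le hθ.2
    have hcos1 : |Real.cos (2*π*θ)| ≤ 1 := Real.abs_cos_le_one _
    rcases eq_or_ne θ (1/4) with rfl | hne
    · have hc : Real.cos (2*π*(1/4 : ℝ)) = 0 := by
        rw [show 2*π*(1/4:ℝ) = π/2 by ring]; exact Real.cos_pi_div_two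
      rw [hc]
      simp
    · have hd : 0 < |θ - 1/4| := abs_pos.mpr (sub_ne_zero.mpr hne)
      have h2 : Real.log (4 * |θ - 1/4|) ≤ Real.log |Real.cos (2*π*θ)| :=
        Real.log_le_log (by positivity) hle
      rw [Real.log_mul (by norm_num) hd.ne'] at h2
      have h3 : Real.log |Real.cos (2*π*θ)| ≤ 0 := Real.log_nonpos (abs_nonneg _) hcos1
      rw [Real.norm_eq_abs, _root_.abs_of_nonpos h3]
      have : 0 ≤ Real.log 4 := Real.log_nonneg (by norm_num)
      linarith

lemma intervalIntegrable_log_abs_cos :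
    IntervalIntegrable (fun θ => Real.log |Real.cos (2 * π * θ)|) volume 0 1 := by
  apply intervalIntegrable_log_abs_cos_half.trans (b := 1/2)
  have h := intervalIntegrable_log_abs_cos_half.comp_sub_right (1/2)
  rw [show (0:ℝ)+1/2 = 1/2 by norm_num, show (1:ℝ)/2+1/2 = 1 by norm_num] at h
  have he : (fun θ : ℝ => Real.log |Real.cos (2*π*(θ - 1/2))|) =
      (fun θ : ℝ => Real.log |Real.cos (2*π*θ)|) := by
    funext θ
    rw [show 2*π*(θ - 1/2) = 2*π*θ - π by ring, Real.cos_sub_pi, abs_neg]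
  rwa [he] at h

lemma integral_log_abs_one_add_circle {c : ℝ} (hc : |c| < 1) :
    ∫ t in (0:ℝ)..(2*π), Real.log (‖1 + (c:ℂ) * Complex.exp (t * Complex.I)‖) = 0 := by
  set f : ℂ → ℂ := fun z => Complex.log (1 + (c:ℂ) * z) with hf
  have hmem : ∀ z : ℂ, ‖z‖ ≤ 1 → (1 + (c:ℂ) * z) ∈ Complex.slitPlane := by
    intro z hz
    apply Complex.mem_slitPlane_iff.mpr
    left
    have : ‖(c:ℂ) * z‖ < 1 := by
      rw [norm_mul, Complex.norm_real, Real.norm_eq_abs]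
      calc |c| * ‖z‖ ≤ |c| * 1 := by
            exact mul_le_mul_of_nonneg_left hz (abs_nonneg _)
        _ < 1 := by simpa using hc
    have hre : |((c:ℂ) * z).re| < 1 := lt_of_le_of_lt (Complex.abs_re_le_norm _) this
    have : (1 + (c:ℂ)*z).re = 1 + ((c:ℂ)*z).re := by simp
    rw [this]
    cases' abs_lt.mp hre with h1 h2
    linarith
  have hdiff : DifferentiableOn ℂ f (Metric.closedBall 0 1) := by
    intro z hz
    have hz1 : ‖z‖ ≤ 1 := by simpa [Complex.dist_eq] using Metric.mem_closedBall.mp hz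
    exact (((differentiable_const _).add ((differentiable_const _).mul differentiable_id)) z
      |>.clog (hmem z hz1)).differentiableWithinAt
  have hdc : DiffContOnCl ℂ f (Metric.ball 0 1) := by
    apply DifferentiableOn.diffContOnCl
    rwa [closure_ball (0:ℂ) one_ne_zero]
  have hcauchy := hdc.circleIntegral_sub_inv_smul (Metric.mem_ball_self one_pos)
  have hf0 : f 0 = 0 := by simp [hf]
  rw [hf0, smul_zero] at hcauchy
  rw [circleIntegral] at hcauchy
  have heq : ∀ θ : ℝ, deriv (circleMap 0 1) θ • ((circleMap 0 1 θ - 0)⁻¹ • f (circleMap 0 1 θ))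
      = Complex.I * f (circleMap 0 1 θ) := by
    intro θ
    rw [deriv_circleMap]
    have hne : circleMap 0 1 θ ≠ 0 := circleMap_ne_center one_ne_zero
    field_simp [smul_eq_mul]
    simp only [smul_eq_mul, sub_zero, one_div]
    rw [show circleMap 0 1 θ * I * ((circleMap 0 1 θ)⁻¹ * f (circleMap 0 1 θ)) = (circleMap 0 1 θ * (circleMap 0 1 θ)⁻¹) * (I * f (circleMap 0 1 θ)) by ring, mul_inv_cancel₀ hne, one_mul]
  simp_rw [heq] at hcauchy
  rw [intervalIntegral.integral_const_mul] at hcauchy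
  have hint : ∫ θ in (0:ℝ)..(2*π), f (circleMap 0 1 θ) = 0 := by
    rcases mul_eq_zero.mp hcauchy with h | h
    · exact absurd h Complex.I_ne_zero
    · exact h
  have hcont : Continuous fun θ : ℝ => f (circleMap 0 1 θ) := by
    apply continuous_iff_continuousAt.mpr
    intro θ
    have h1 : ‖circleMap 0 1 θ‖ ≤ 1 := by simp [circleMap]
    have hc2 : Continuous fun θ : ℝ => 1 + (c:ℂ) * circleMap 0 1 θ :=
      continuous_const.add (continuous_const.mul (continuous_circleMap 0 1))
    exact ContinuousAt.comp (f := fun θ : ℝ => 1 + (c:ℂ) * circleMap 0 1 θ)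
      (g := Complex.log) (continuousAt_clog (hmem _ h1)) hc2.continuousAt
  have hii : IntervalIntegrable (fun θ : ℝ => f (circleMap 0 1 θ)) volume 0 (2*π) :=
    hcont.intervalIntegrable _ _
  have hre := Complex.reCLM.intervalIntegral_comp_comm hii
  rw [hint] at hre
  simp only [Complex.reCLM_apply, Complex.zero_re] at hre
  have hfin : ∫ t in (0:ℝ)..(2*π), Real.log (‖1 + (c:ℂ) * Complex.exp (t * Complex.I)‖)
      = ∫ x in (0:ℝ)..(2*π), (f (circleMap 0 1 x)).re := by
    apply intervalIntegral.integral_congr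
    intro θ _
    simp only [hf, Complex.log_re, circleMap, zero_add]
    norm_num
  rw [hfin, hre]


-- key factorization of |cos| for any ε, θ
lemma abs_cos_factor (ε θ : ℝ) :
    ‖Complex.cos (2 * π * ((θ : ℂ) + (ε : ℂ) * Complex.I))‖
      = Real.exp (2*π*ε) / 2
        * ‖1 + (Real.exp (-(4*π*ε)) : ℝ) * Complex.exp ((4*π*θ : ℝ) * Complex.I)‖ := by
  set z : ℂ := 2 * π * ((θ : ℂ) + (ε : ℂ) * Complex.I) with hz
  have h1 : Complex.cos z =
      Complex.exp (((2*π*ε : ℝ) : ℂ) - ((2*π*θ : ℝ) : ℂ) * Complex.I)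
        * (1 + ((Real.exp (-(4*π*ε)) : ℝ) : ℂ) * Complex.exp (((4*π*θ : ℝ) : ℂ) * Complex.I)) / 2 := by
    rw [Complex.cos]
    have e1 : z * Complex.I = ((2*π*θ : ℝ) : ℂ) * Complex.I - ((2*π*ε : ℝ) : ℂ) := by
      rw [hz]; push_cast; ring_nf; rw [Complex.I_sq]; ring
    have e2 : -z * Complex.I = ((2*π*ε : ℝ) : ℂ) - ((2*π*θ : ℝ) : ℂ) * Complex.I := by
      rw [neg_mul, e1]; ring
    have e3 : ((Real.exp (-(4*π*ε)) : ℝ) : ℂ) = Complex.exp (((-(4*π*ε) : ℝ) : ℂ)) :=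
      Complex.ofReal_exp _
    rw [e1, e2, e3, mul_add, mul_one, ← Complex.exp_add, ← Complex.exp_add]
    rw [add_comm (Complex.exp _)]
    congr 3
    push_cast
    ring
  rw [h1]
  rw [norm_div, norm_mul, Complex.norm_exp]
  have hre : ((((2*π*ε : ℝ) : ℂ) - ((2*π*θ : ℝ) : ℂ) * Complex.I)).re = 2*π*ε := by simp
  rw [hre, Complex.norm_two]
  push_cast
  ring

lemma abs_one_add_pos {c : ℝ} (hc : |c| < 1) {w : ℂ} (hw : ‖w‖ = 1) :
    0 < ‖1 + (c:ℂ) * w‖ := by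
  have h1 : ‖(c:ℂ) * w‖ = |c| := by
    rw [norm_mul, Complex.norm_real, Real.norm_eq_abs, hw, mul_one]
  have h2 : (1:ℝ) ≤ ‖1 + (c:ℂ)*w‖ + ‖(c:ℂ)*w‖ := by
    have := norm_add_le (1 + (c:ℂ)*w) (-((c:ℂ)*w))
    simpa using this
  rw [h1] at h2
  linarith

theorem integral_pos_case {ε : ℝ} (hε : 0 < ε) :
    ∫ θ in (0:ℝ)..1,
        Real.log (‖Complex.cos (2 * π * ((θ : ℂ) + (ε : ℂ) * Complex.I))‖) =
      2 * π * ε - Real.log 2 := by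
  set c : ℝ := Real.exp (-(4*π*ε)) with hcdef
  have hc : |c| < 1 := by
    rw [_root_.abs_of_pos (Real.exp_pos _)]
    apply Real.exp_lt_one_iff.mpr
    have := pi_pos
    nlinarith
  set g : ℝ → ℝ := fun t => Real.log (‖1 + (c:ℂ) * Complex.exp ((t:ℂ) * Complex.I)‖)
    with hgdef
  have habs1 : ∀ t : ℝ, ‖Complex.exp ((t:ℂ) * Complex.I)‖ = 1 := by
    intro t
    rw [Complex.norm_exp]
    simp
  have hgc : Continuous g := by
    apply continuous_iff_continuousAt.mpr
    intro t
    have hpos := abs_one_add_pos hc (habs1 t)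
    exact ContinuousAt.comp (f := fun t : ℝ => ‖1 + (c:ℂ) * Complex.exp ((t:ℂ) * Complex.I)‖)
      (g := Real.log) (Real.continuousAt_log hpos.ne')
      ((continuous_norm.comp
        (continuous_const.add (continuous_const.mul
          (Complex.continuous_exp.comp (Complex.continuous_ofReal.mul continuous_const))))).continuousAt)
  have key : ∀ θ : ℝ,
      Real.log (‖Complex.cos (2 * π * ((θ : ℂ) + (ε : ℂ) * Complex.I))‖)
        = (2*π*ε - Real.log 2) + g (4*π*θ) := by
    intro θ
    rw [abs_cos_factor]
    have hpos := abs_one_add_pos hc (habs1 (4*π*θ))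
    rw [Real.log_mul (by positivity) hpos.ne', Real.log_div (Real.exp_ne_zero _) two_ne_zero,
      Real.log_exp]
  rw [intervalIntegral.integral_congr (g := fun θ => (2*π*ε - Real.log 2) + g (4*π*θ))
    (fun θ _ => key θ)]
  have h2pi : ∫ t in (0:ℝ)..(2*π), g t = 0 := integral_log_abs_one_add_circle hc
  have hper : ∀ x : ℝ, g (x + 2*π) = g x := by
    intro x
    simp only [hgdef]
    congr 3
    push_cast
    rw [add_mul, Complex.exp_add, Complex.exp_two_pi_mul_I, mul_one]
  have h4pi : ∫ t in (0:ℝ)..(4*π), g t = 0 := by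
    have hi1 : IntervalIntegrable g volume 0 (2*π) := hgc.intervalIntegrable _ _
    have hi2 : IntervalIntegrable g volume (2*π) (4*π) := hgc.intervalIntegrable _ _
    rw [← intervalIntegral.integral_add_adjacent_intervals hi1 hi2, h2pi, zero_add]
    have := intervalIntegral.integral_comp_add_right (a := (0:ℝ)) (b := 2*π) (f := g) (2*π)
    rw [zero_add, show (2*π) + 2*π = 4*π by ring] at this
    rw [← this]
    rw [intervalIntegral.integral_congr (g := g) (fun x _ => hper x), h2pi]
  have hcomp : ∫ θ in (0:ℝ)..1, g (4*π*θ) = 0 := by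
    rw [intervalIntegral.integral_comp_mul_left g (by positivity : (4*π:ℝ) ≠ 0)]
    rw [mul_zero, mul_one, h4pi, smul_zero]
  have hint : IntervalIntegrable (fun θ : ℝ => g (4*π*θ)) volume 0 1 := by
    have : Continuous fun θ : ℝ => g (4*π*θ) := hgc.comp (continuous_const.mul continuous_id)
    exact this.intervalIntegrable _ _
  rw [intervalIntegral.integral_add intervalIntegrable_const hint, hcomp,
    intervalIntegral.integral_const]
  simp

lemma cos_real_add_real_mul_I (a b : ℝ) :
    Complex.cos ((a:ℂ) + (b:ℂ) * Complex.I)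
      = (Real.cos a : ℂ) * (Real.cosh b : ℂ) - (Real.sin a : ℂ) * (Real.sinh b : ℂ) * Complex.I := by
  rw [Complex.cos_add, Complex.cos_mul_I, Complex.sin_mul_I,
    ← Complex.ofReal_cos, ← Complex.ofReal_sin, ← Complex.ofReal_cosh, ← Complex.ofReal_sinh]
  ring

lemma abs_cos_sq (a b : ℝ) :
    (‖Complex.cos ((a:ℂ) + (b:ℂ) * Complex.I)‖)^2
      = (Real.cos a)^2 * (Real.cosh b)^2 + (Real.sin a)^2 * (Real.sinh b)^2 := by
  rw [cos_real_add_real_mul_I, Complex.sq_norm]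
  simp [Complex.normSq_apply, Complex.cos_ofReal_re, Complex.sin_ofReal_re, Complex.sinh_ofReal_re]
  ring

lemma abs_cos_lower (a b : ℝ) :
    |Real.cos a| ≤ ‖Complex.cos ((a:ℂ) + (b:ℂ) * Complex.I)‖ := by
  rw [← Real.sqrt_sq_eq_abs, ← Real.sqrt_sq (norm_nonneg _)]
  apply Real.sqrt_le_sqrt
  rw [abs_cos_sq]
  have h1 : 1 ≤ (Real.cosh b)^2 := by nlinarith [Real.one_le_cosh b]
  nlinarith [sq_nonneg (Real.sin a * Real.sinh b),
    mul_le_mul_of_nonneg_left h1 (sq_nonneg (Real.cos a))]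

lemma abs_cos_upper (a b : ℝ) :
    ‖Complex.cos ((a:ℂ) + (b:ℂ) * Complex.I)‖ ≤ Real.exp |b| := by
  have hch : Real.cosh b ≤ Real.exp |b| := by
    rw [Real.cosh_eq]
    have h1 : Real.exp b ≤ Real.exp |b| := Real.exp_le_exp.mpr (le_abs_self b)
    have h2 : Real.exp (-b) ≤ Real.exp |b| := Real.exp_le_exp.mpr (neg_le_abs b)
    linarith
  have hsq : (‖Complex.cos ((a:ℂ) + (b:ℂ) * Complex.I)‖)^2 ≤ (Real.cosh b)^2 := by
    rw [abs_cos_sq]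
    have hs : (Real.sinh b)^2 ≤ (Real.cosh b)^2 := by
      nlinarith [Real.cosh_sq b, sq_nonneg (Real.sinh b)]
    nlinarith [sq_nonneg (Real.cos a), sq_nonneg (Real.sin a), Real.sin_sq_add_cos_sq a,
      sq_nonneg (Real.sin a * Real.sinh b), sq_nonneg (Real.sin a * Real.cosh b)]
  have h1 : ‖Complex.cos ((a:ℂ) + (b:ℂ) * Complex.I)‖ ≤ Real.cosh b := by
    rw [← Real.sqrt_sq (norm_nonneg _), ← Real.sqrt_sq (by positivity : (0:ℝ) ≤ Real.cosh b)]
    exact Real.sqrt_le_sqrt hsq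
  exact h1.trans hch

lemma ae_cos_two_pi_ne : ∀ᵐ θ : ℝ, Real.cos (2*π*θ) ≠ 0 := by
  have hsub : {θ : ℝ | Real.cos (2*π*θ) = 0} ⊆ ⋃ k : ℤ, {((2*k+1)/4 : ℝ)} := by
    intro θ hθ
    obtain ⟨k, hk⟩ := Real.cos_eq_zero_iff.mp hθ
    refine Set.mem_iUnion.mpr ⟨k, ?_⟩
    have hπ : π ≠ 0 := Real.pi_ne_zero
    have : θ = (2*k+1)/4 := by
      field_simp at hk ⊢
      nlinarith [hk, Real.pi_pos]
    simp [this]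
  have hc : ({θ : ℝ | Real.cos (2*π*θ) = 0}).Countable :=
    Set.Countable.mono hsub (Set.countable_iUnion fun k => Set.countable_singleton _)
  have hm : volume {θ : ℝ | Real.cos (2*π*θ) = 0} = 0 := hc.measure_zero _
  rw [ae_iff]
  simpa using hm

lemma abs_cos_real_pt (θ : ℝ) :
    ‖Complex.cos (2 * ↑π * ((θ:ℂ) + (((0:ℝ)):ℂ) * Complex.I))‖
      = |Real.cos (2*π*θ)| := by
  rw [show 2 * (π:ℂ) * ((θ:ℂ) + (((0:ℝ)):ℂ) * Complex.I) = ((2*π*θ : ℝ) : ℂ) by push_cast; ring,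
    ← Complex.ofReal_cos, Complex.norm_real, Real.norm_eq_abs]

theorem integral_log_abs_complex_cos (ε : ℝ) :
    ∫ θ in (0:ℝ)..1,
        Real.log (‖Complex.cos (2 * Real.pi * ((θ : ℂ) + (ε : ℂ) * Complex.I))‖) =
      2 * Real.pi * |ε| - Real.log 2 := by
  rcases lt_trichotomy ε 0 with hneg | rfl | hpos
  · -- negative case: reduce to positive by conjugation symmetry
    have hpt : ∀ θ : ℝ,
        ‖Complex.cos (2 * ↑π * ((θ:ℂ) + (ε:ℂ) * Complex.I))‖
          = ‖Complex.cos (2 * ↑π * ((θ:ℂ) + ((-ε : ℝ):ℂ) * Complex.I))‖ := by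
      intro θ
      rw [← Complex.norm_conj (Complex.cos (2 * ↑π * ((θ:ℂ) + ((-ε : ℝ):ℂ) * Complex.I))),
        ← Complex.cos_conj]
      congr 2
      apply Complex.ext <;> simp
    rw [intervalIntegral.integral_congr
      (g := fun θ : ℝ => Real.log (‖Complex.cos
          (2 * ↑π * ((θ:ℂ) + ((-ε : ℝ):ℂ) * Complex.I))‖))
      (fun θ _ => by rw [hpt θ])]
    rw [integral_pos_case (by linarith : (0:ℝ) < -ε), _root_.abs_of_neg hneg]
  · -- zero case: dominated convergence from positive case
    have hint0 : ∀ θ : ℝ,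
        Real.log (‖Complex.cos (2 * ↑π * ((θ:ℂ) + (((0:ℝ)):ℂ) * Complex.I))‖)
          = Real.log |Real.cos (2*π*θ)| := fun θ => by rw [abs_cos_real_pt]
    rw [intervalIntegral.integral_congr
      (g := fun θ : ℝ => Real.log |Real.cos (2*π*θ)|) (fun θ _ => hint0 θ)]
    set F : ℕ → ℝ → ℝ := fun n θ =>
      Real.log (‖Complex.cos
        (2 * ↑π * ((θ:ℂ) + ((1/((n:ℝ)+1) : ℝ):ℂ) * Complex.I))‖) with hF
    have hεn : ∀ n : ℕ, (0:ℝ) < 1/((n:ℝ)+1) := fun n => by positivity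
    have hεn1 : ∀ n : ℕ, (1/((n:ℝ)+1) : ℝ) ≤ 1 := fun n => by
      rw [div_le_one (by positivity)]; simp
    have harg : ∀ (θ e : ℝ), 2 * (π:ℂ) * ((θ:ℂ) + (e:ℂ) * Complex.I)
        = ((2*π*θ : ℝ) : ℂ) + ((2*π*e : ℝ) : ℂ) * Complex.I := by
      intro θ e; push_cast; ring
    have hdct := intervalIntegral.tendsto_integral_filter_of_dominated_convergence
      (l := Filter.atTop) (μ := volume) (a := (0:ℝ)) (b := 1) (F := F)
      (f := fun θ : ℝ => Real.log |Real.cos (2*π*θ)|)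
      (bound := fun θ : ℝ => 2*π + ‖Real.log |Real.cos (2*π*θ)|‖)
      ?_ ?_ ?_ ?_
    · have hval : (fun n : ℕ => ∫ θ in (0:ℝ)..1, F n θ)
          = (fun n : ℕ => 2*π*(1/((n:ℝ)+1)) - Real.log 2) :=
        funext fun n => integral_pos_case (hεn n)
      rw [hval] at hdct
      have h3 : Filter.Tendsto (fun n : ℕ => 2*π*(1/((n:ℝ)+1)) - Real.log 2)
          Filter.atTop (nhds (2*π*0 - Real.log 2)) :=
        (tendsto_one_div_add_atTop_nhds_zero_nat.const_mul _).sub_const _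
      have := tendsto_nhds_unique hdct h3
      rw [this]
      norm_num
    · exact Filter.Eventually.of_forall fun n =>
        ((Real.measurable_log.comp (continuous_norm.comp (Complex.continuous_cos.comp
          (continuous_const.mul (Complex.continuous_ofReal.add continuous_const)))).measurable)).aestronglyMeasurable
    · refine Filter.Eventually.of_forall fun n => ?_
      filter_upwards [ae_cos_two_pi_ne] with θ hθ _
      set e : ℝ := 1/((n:ℝ)+1)
      set A := ‖Complex.cos (2 * ↑π * ((θ:ℂ) + (e:ℂ) * Complex.I))‖ with hA
      have hlow : |Real.cos (2*π*θ)| ≤ A := by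
        rw [hA, harg θ e]; exact abs_cos_lower _ _
      have hup : A ≤ Real.exp (2*π) := by
        rw [hA, harg θ e]
        refine (abs_cos_upper _ _).trans (Real.exp_le_exp.mpr ?_)
        rw [_root_.abs_of_pos (by positivity : (0:ℝ) < 2*π*e)]
        have := hεn1 n
        nlinarith [pi_pos]
      have hA0 : 0 < A := lt_of_lt_of_le (abs_pos.mpr hθ) hlow
      show ‖F n θ‖ ≤ 2*π + ‖Real.log |Real.cos (2*π*θ)|‖
      have hFA : F n θ = Real.log A := rfl
      rw [hFA]
      have h4 : -Real.log |Real.cos (2*π*θ)| ≤ ‖Real.log |Real.cos (2*π*θ)|‖ := by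
        rw [Real.norm_eq_abs]; exact neg_le_abs _
      have h5 : (0:ℝ) ≤ ‖Real.log |Real.cos (2*π*θ)|‖ := norm_nonneg _
      rcases le_or_gt A 1 with h1 | h1
      · rw [show ‖Real.log A‖ = -Real.log A by
          rw [Real.norm_eq_abs]; exact _root_.abs_of_nonpos (Real.log_nonpos hA0.le h1)]
        have h2 : Real.log |Real.cos (2*π*θ)| ≤ Real.log A :=
          Real.log_le_log (abs_pos.mpr hθ) hlow
        have := pi_pos
        linarith
      · rw [show ‖Real.log A‖ = Real.log A by
          rw [Real.norm_eq_abs]; exact _root_.abs_of_nonneg (Real.log_nonneg h1.le)]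
        have h2 : Real.log A ≤ 2*π := by
          calc Real.log A ≤ Real.log (Real.exp (2*π)) := Real.log_le_log hA0 hup
            _ = 2*π := Real.log_exp _
        linarith
    · exact intervalIntegrable_const.add intervalIntegrable_log_abs_cos.norm
    · filter_upwards [ae_cos_two_pi_ne] with θ hθ _
      have habs0 : ‖Complex.cos (2 * ↑π * ((θ:ℂ) + (((0:ℝ)):ℂ) * Complex.I))‖
          = |Real.cos (2*π*θ)| := abs_cos_real_pt θ
      have hcont : ContinuousAt (fun e : ℝ =>
          Real.log (‖Complex.cos (2 * ↑π * ((θ:ℂ) + (e:ℂ) * Complex.I))‖)) 0 := by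
        apply ContinuousAt.comp (f := fun e : ℝ =>
            ‖Complex.cos (2 * ↑π * ((θ:ℂ) + (e:ℂ) * Complex.I))‖)
          (g := Real.log)
        · apply Real.continuousAt_log
          rw [habs0]
          exact abs_ne_zero.mpr hθ
        · exact (continuous_norm.comp (Complex.continuous_cos.comp
            (continuous_const.mul (continuous_const.add
              (Complex.continuous_ofReal.mul continuous_const))))).continuousAt
      have hc2 := hcont.tendsto.comp tendsto_one_div_add_atTop_nhds_zero_nat
      simp only [Function.comp_def] at hc2
      rw [habs0] at hc2
      exact hc2
  · rw [_root_.abs_of_pos hpos]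
    exact integral_pos_case hpos
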